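/- Let m ∈ ℕ (m ≥ 1) and l ∈ ℕ (l ≥ 1). Then there exists a finite connected simplicial complex K such that deg_m(v, K) = l for every vertex v of K. -/

import Mathlib

namespace RSC

variable {V : Type*} [DecidableEq V]

/-- A finite abstract simplicial complex on vertex type `V`. -/
structure SC (V : Type*) [DecidableEq V] where
  simplices : Finset (Finset V)
  nonempty_mem : ∀ σ ∈ simplices, σ.Nonempty
  down_closed : ∀ σ ∈ simplices, ∀ τ ⊆ σ, τ.Nonempty → τ ∈ simplices

namespace SC

/-- The `p`-simplices (cardinality `p+1`). -/
def simplicesDim (K : SC V) (p : ℕ) : Finset (Finset V) :=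
  K.simplices.filter fun σ => σ.card = p + 1

/-- The number of `p`-simplices. -/
def fnum (K : SC V) (p : ℕ) : ℕ := (K.simplicesDim p).card

/-- The dimension of a finite simplicial complex. -/
def dimension (K : SC V) : ℕ := K.simplices.sup fun σ => σ.card - 1

/-- The `p`-th chain group over `ℤ₂`. -/
abbrev Chain (K : SC V) (p : ℕ) : Type _ := ↥(K.simplicesDim p) → ZMod 2

/-- The boundary map `∂_{p+1} : C_{p+1} → C_p`. -/
def boundary (K : SC V) (p : ℕ) : Chain K (p + 1) →ₗ[ZMod 2] Chain K p where
  toFun f := fun τ => ∑ σ : ↥(K.simplicesDim (p + 1)),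
    if (τ : Finset V) ⊆ (σ : Finset V) then f σ else 0
  map_add' f g := by
    funext τ
    simp only [Pi.add_apply]
    rw [← Finset.sum_add_distrib]
    refine Finset.sum_congr rfl fun σ _ => ?_
    split <;> simp
  map_smul' c f := by
    funext τ
    simp only [Pi.smul_apply, smul_eq_mul, RingHom.id_apply]
    rw [Finset.mul_sum]
    refine Finset.sum_congr rfl fun σ _ => ?_
    split <;> simp

/-- The rank of the cycle space `Z_p = ker ∂_p` (with `∂_0 = 0`). -/
noncomputable def cycleRank (K : SC V) : ℕ → ℕ
  | 0 => Module.finrank (ZMod 2) (Chain K 0)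
  | (q + 1) => Module.finrank (ZMod 2) (LinearMap.ker (K.boundary q))

/-- The `p`-th Betti number over `ℤ₂`: `dim Z_p − dim B_p`. -/
noncomputable def betti (K : SC V) (p : ℕ) : ℕ :=
  K.cycleRank p - Module.finrank (ZMod 2) (LinearMap.range (K.boundary p))

/-- The induced subcomplex on a vertex set `I`. -/
def induced (K : SC V) (I : Finset V) : SC V where
  simplices := K.simplices.filter fun σ => σ ⊆ I
  nonempty_mem := fun σ hσ => K.nonempty_mem σ (Finset.mem_filter.mp hσ).1
  down_closed := fun σ hσ τ hτσ hτ => by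
    rw [Finset.mem_filter] at hσ ⊢
    exact ⟨K.down_closed σ hσ.1 τ hτσ hτ, hτσ.trans hσ.2⟩

/-- The `j`-skeleton. -/
def skeleton (K : SC V) (j : ℕ) : SC V where
  simplices := K.simplices.filter fun σ => σ.card ≤ j + 1
  nonempty_mem := fun σ hσ => K.nonempty_mem σ (Finset.mem_filter.mp hσ).1
  down_closed := fun σ hσ τ hτσ hτ => by
    rw [Finset.mem_filter] at hσ ⊢
    exact ⟨K.down_closed σ hσ.1 τ hτσ hτ, (Finset.card_le_card hτσ).trans hσ.2⟩

/-- The subcomplex obtained by deleting the vertex `v`. -/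
def deleteVertex (K : SC V) (v : V) : SC V where
  simplices := K.simplices.filter fun σ => v ∉ σ
  nonempty_mem := fun σ hσ => K.nonempty_mem σ (Finset.mem_filter.mp hσ).1
  down_closed := fun σ hσ τ hτσ hτ => by
    rw [Finset.mem_filter] at hσ ⊢
    exact ⟨K.down_closed σ hσ.1 τ hτσ hτ, fun hv => hσ.2 (hτσ hv)⟩

/-- The vertex set of `K`. -/
def verts (K : SC V) : Finset V := K.simplices.sup id

/-- `v` is a vertex of `K`. -/
def IsVertex (K : SC V) (v : V) : Prop := ({v} : Finset V) ∈ K.simplices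

/-- The `n`-simplex degree of a vertex `v`. -/
def deg (K : SC V) (n : ℕ) (v : V) : ℕ :=
  (K.simplices.filter fun σ => v ∈ σ ∧ σ.card = n + 1).card

/-- Two vertices are joined by a path of edges of `K`. -/
def Reachable (K : SC V) (v w : V) : Prop :=
  Relation.ReflTransGen (fun a b => ({a, b} : Finset V) ∈ K.simplices) v w

/-- The Euler characteristic of `K`. -/
noncomputable def euler (K : SC V) : ℤ :=
  ∑ i ∈ Finset.range (K.dimension + 1), (-1 : ℤ) ^ i * K.fnum i

end SC

end RSC


namespace RegAux
open RSC RSC.SC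

variable (m l : ℕ) [NeZero l]

/-- the top simplices -/
def T (a b : ZMod l) : Finset ℕ :=
  (Finset.range (m+1)).image fun i : ℕ => i * l + ZMod.val (a + b * (i : ZMod l))

lemma enc_inj {i i' : ℕ} {c c' : ZMod l} (h : i * l + c.val = i' * l + c'.val) :
    i = i' ∧ c = c' := by
  have hc := ZMod.val_lt c
  have hc' := ZMod.val_lt c'
  have hi : i = i' := by
    rcases Nat.lt_trichotomy i i' with h' | h' | h'
    · exfalso; have : i + 1 ≤ i' := h'; nlinarith
    · exact h'
    · exfalso; have : i' + 1 ≤ i := h'; nlinarith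
  refine ⟨hi, ?_⟩
  subst hi
  have : c.val = c'.val := by omega
  exact ZMod.val_injective l this

set_option linter.unusedSectionVars false in
lemma mem_T {v : ℕ} {a b : ZMod l} :
    v ∈ T m l a b ↔ ∃ i ≤ m, v = i * l + (a + b * (i : ZMod l)).val := by
  simp only [T, Finset.mem_image, Finset.mem_range, Nat.lt_succ_iff]
  constructor
  · rintro ⟨i, hi, h⟩; exact ⟨i, hi, h.symm⟩
  · rintro ⟨i, hi, h⟩; exact ⟨i, hi, h.symm⟩

lemma card_T (a b : ZMod l) : (T m l a b).card = m + 1 := by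
  rw [T, Finset.card_image_of_injOn, Finset.card_range]
  intro i _ i' _ h
  exact (enc_inj l h).1

lemma T_inj (hm : 1 ≤ m) {a b a' b' : ZMod l} (h : T m l a b = T m l a' b') :
    a = a' ∧ b = b' := by
  have h0 : (0 : ℕ) * l + (a + b * ((0:ℕ) : ZMod l)).val ∈ T m l a' b' := by
    rw [← h, mem_T]; exact ⟨0, Nat.zero_le m, rfl⟩
  rw [mem_T] at h0
  obtain ⟨i, hi, hei⟩ := h0
  obtain ⟨hi0, ha⟩ := enc_inj l hei
  have ha : a = a' := by
    subst hi0; simpa using ha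
  have h1 : (1 : ℕ) * l + (a + b * ((1:ℕ) : ZMod l)).val ∈ T m l a' b' := by
    rw [← h, mem_T]; exact ⟨1, hm, rfl⟩
  rw [mem_T] at h1
  obtain ⟨i, hi, hei⟩ := h1
  obtain ⟨hi1, hb⟩ := enc_inj l hei
  subst hi1
  simp only [Nat.cast_one, mul_one] at hb
  rw [ha] at hb
  exact ⟨ha, by exact add_left_cancel hb⟩


/-- The simplicial complex: downward closure of all the `T a b`. -/
def cx : Finset (Finset ℕ) :=
  (Finset.univ : Finset (ZMod l × ZMod l)).biUnion fun p =>
    (T m l p.1 p.2).powerset.filter (·.Nonempty)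

lemma mem_cx {σ : Finset ℕ} :
    σ ∈ cx m l ↔ (∃ a b : ZMod l, σ ⊆ T m l a b) ∧ σ.Nonempty := by
  simp only [cx, Finset.mem_biUnion, Finset.mem_univ, Finset.mem_filter,
    Finset.mem_powerset, true_and, Prod.exists]
  constructor
  · rintro ⟨a, b, hs, hn⟩; exact ⟨⟨a, b, hs⟩, hn⟩
  · rintro ⟨⟨a, b, hs⟩, hn⟩; exact ⟨a, b, hs, hn⟩

/-- The regular complex. -/
def K : SC ℕ where
  simplices := cx m l
  nonempty_mem := fun σ hσ => ((mem_cx m l).mp hσ).2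
  down_closed := fun σ hσ τ hτσ hτ => by
    rw [mem_cx] at hσ ⊢
    obtain ⟨⟨a, b, hs⟩, _⟩ := hσ
    exact ⟨⟨a, b, hτσ.trans hs⟩, hτ⟩

lemma edge_reach {x y : ℕ} (a b : ZMod l) (hx : x ∈ T m l a b) (hy : y ∈ T m l a b) :
    (K m l).Reachable x y := by
  refine Relation.ReflTransGen.single ?_
  show ({x, y} : Finset ℕ) ∈ cx m l
  rw [mem_cx]
  refine ⟨⟨a, b, ?_⟩, ⟨x, Finset.mem_insert_self x {y}⟩⟩
  intro z hz
  rcases Finset.mem_insert.mp hz with h | h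
  · exact h ▸ hx
  · exact (Finset.mem_singleton.mp h) ▸ hy

lemma reach_symm {x y : ℕ} (h : (K m l).Reachable x y) : (K m l).Reachable y x := by
  refine (@Relation.ReflTransGen.stdSymm _ _ ⟨?_⟩).symm _ _ h
  intro u v huv
  show ({v, u} : Finset ℕ) ∈ (K m l).simplices
  rwa [Finset.pair_comm]

lemma enc_mem_T {i : ℕ} (hi : i ≤ m) (c b : ZMod l) :
    i * l + ZMod.val c ∈ T m l (c - b * (i : ZMod l)) b := by
  rw [mem_T]
  exact ⟨i, hi, by rw [sub_add_cancel]⟩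

lemma reach_to_col {i : ℕ} (hi : i ≤ m) (c : ZMod l) :
    (K m l).Reachable (i * l + ZMod.val c) (ZMod.val c) := by
  refine edge_reach m l c 0 ?_ ?_
  · rw [mem_T]; exact ⟨i, hi, by simp⟩
  · rw [mem_T]; exact ⟨0, Nat.zero_le m, by simp⟩

lemma reach_step (hm : 1 ≤ m) (c : ZMod l) :
    (K m l).Reachable (ZMod.val c) (ZMod.val (c + 1)) := by
  -- via vertex 1 * l + (c+1).val : edges in T c 1 and T (c+1) 0
  have hA : ZMod.val c ∈ T m l c 1 := by
    rw [mem_T]; exact ⟨0, Nat.zero_le m, by simp⟩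
  have hB : (1 : ℕ) * l + ZMod.val (c + 1) ∈ T m l c 1 := by
    rw [mem_T]; exact ⟨1, hm, by simp⟩
  have hC : (1 : ℕ) * l + ZMod.val (c + 1) ∈ T m l (c + 1) 0 := by
    rw [mem_T]; exact ⟨1, hm, by simp⟩
  have hD : ZMod.val (c + 1) ∈ T m l (c + 1) 0 := by
    rw [mem_T]; exact ⟨0, Nat.zero_le m, by simp⟩
  exact (edge_reach m l c 1 hA hB).trans (edge_reach m l (c + 1) 0 hC hD)

lemma reach_base (hm : 1 ≤ m) (c : ZMod l) :
    (K m l).Reachable (ZMod.val (0 : ZMod l)) (ZMod.val c) := by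
  have key : ∀ k : ℕ, (K m l).Reachable (ZMod.val (0 : ZMod l))
      (ZMod.val ((k : ℕ) : ZMod l)) := by
    intro k
    induction k with
    | zero => simp only [Nat.cast_zero]; exact Relation.ReflTransGen.refl
    | succ n ih =>
      have := reach_step m l hm ((n : ℕ) : ZMod l)
      push_cast at this ⊢
      exact ih.trans this
  have := key c.val
  rwa [ZMod.natCast_val, ZMod.cast_id] at this

lemma isVertex_iff {v : ℕ} :
    (K m l).IsVertex v ↔ ∃ i ≤ m, ∃ c : ZMod l, v = i * l + ZMod.val c := by
  show ({v} : Finset ℕ) ∈ cx m l ↔ _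
  rw [mem_cx]
  constructor
  · rintro ⟨⟨a, b, hs⟩, -⟩
    have := hs (Finset.mem_singleton_self v)
    rw [mem_T] at this
    obtain ⟨i, hi, h⟩ := this
    exact ⟨i, hi, _, h⟩
  · rintro ⟨i, hi, c, rfl⟩
    refine ⟨⟨c - 0 * (i : ZMod l), 0, ?_⟩, Finset.singleton_nonempty _⟩
    intro z hz
    rw [Finset.mem_singleton] at hz
    exact hz ▸ enc_mem_T m l hi c 0

lemma deg_eq (hm : 1 ≤ m) {i : ℕ} (hi : i ≤ m) (c : ZMod l) :
    (K m l).deg m (i * l + ZMod.val c) = l := by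
  set v := i * l + ZMod.val c with hv
  have key : ((K m l).simplices.filter fun σ => v ∈ σ ∧ σ.card = m + 1) =
      Finset.image (fun b : ZMod l => T m l (c - b * (i : ZMod l)) b) Finset.univ := by
    ext σ
    simp only [Finset.mem_filter, Finset.mem_image, Finset.mem_univ, true_and]
    constructor
    · rintro ⟨hσ, hvσ, hcard⟩
      rw [show (K m l).simplices = cx m l from rfl, mem_cx] at hσ
      obtain ⟨⟨a, b, hs⟩, -⟩ := hσ
      have hσT : σ = T m l a b :=
        Finset.eq_of_subset_of_card_le hs (by rw [card_T, hcard])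
      subst hσT
      have := hvσ
      rw [mem_T] at this
      obtain ⟨i', hi', h⟩ := this
      obtain ⟨rfl, hc⟩ := enc_inj l h
      refine ⟨b, ?_⟩
      congr 1
      rw [hc]; ring
    · rintro ⟨b, rfl⟩
      refine ⟨?_, enc_mem_T m l hi c b, card_T m l _ _⟩
      rw [show (K m l).simplices = cx m l from rfl, mem_cx]
      exact ⟨⟨_, b, Finset.Subset.refl _⟩,
        Finset.card_pos.mp (by rw [card_T]; omega)⟩
  rw [SC.deg, key, Finset.card_image_of_injective _ ?_, Finset.card_univ, ZMod.card]
  intro b b' h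
  exact (T_inj m l hm h).2

end RegAux

open RSC RSC.SC in
/-- for every `m ≥ 1` and `l ≥ 1` there is a (nonempty) finite
connected simplicial complex all of whose vertices have `m`-simplex degree `l`. -/
theorem exists_connected_complex_regular_deg (m l : ℕ) (hm : 1 ≤ m) (hl : 1 ≤ l) :
    ∃ K : SC ℕ, K.simplices.Nonempty ∧
      (∀ v w, K.IsVertex v → K.IsVertex w → K.Reachable v w) ∧
      (∀ v, K.IsVertex v → K.deg m v = l) := by
  haveI : NeZero l := ⟨by omega⟩
  refine ⟨RegAux.K m l, ?_, ?_, ?_⟩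
  · refine ⟨RegAux.T m l 0 0, ?_⟩
    rw [show (RegAux.K m l).simplices = RegAux.cx m l from rfl, RegAux.mem_cx]
    exact ⟨⟨0, 0, Finset.Subset.refl _⟩,
      Finset.card_pos.mp (by rw [RegAux.card_T]; omega)⟩
  · intro v w hv hw
    rw [RegAux.isVertex_iff] at hv hw
    obtain ⟨i, hi, c, rfl⟩ := hv
    obtain ⟨j, hj, d, rfl⟩ := hw
    refine ((RegAux.reach_to_col m l hi c).trans ?_).trans
      (RegAux.reach_symm m l (RegAux.reach_to_col m l hj d))
    exact (RegAux.reach_symm m l (RegAux.reach_base m l hm c)).trans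
      (RegAux.reach_base m l hm d)
  · intro v hv
    rw [RegAux.isVertex_iff] at hv
    obtain ⟨i, hi, c, rfl⟩ := hv
    exact RegAux.deg_eq m l hm hi c
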